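/- Let A be a field of characteristic zero, B a finite-dimensional commutative A-algebra all of whose residue fields are A, and π : B → A an A-algebra homomorphism. Let (K, e) be a D-field with K algebraically closed, and let F be a subfield of K containing A such that e maps F into the canonical image of F ⊗[A] B in K ⊗[A] B and such that every associated endomorphism ρ^K ∘ e restricts to a bijection of F. Let F' = {x ∈ K : x is algebraic over F}. Then e maps F' into the canonical image of F' ⊗[A] B in K ⊗[A] B, and every associated endomorphism ρ^K ∘ e restricts to a bijection of F'. -/

import Mathlib

open Polynomial

/-- For an `A`-algebra homomorphism `ρ : B →ₐ[A] A`, the induced `A`-algebra homomorphism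
`ρ^L : L ⊗[A] B → L`, determined by `l ⊗ b ↦ l • ρ b`. -/
noncomputable def rhoHom (A L B : Type*) [CommSemiring A] [CommRing L] [Algebra A L]
    [CommRing B] [Algebra A B] (ρ : B →ₐ[A] A) : TensorProduct A L B →ₐ[A] L :=
  (Algebra.TensorProduct.rid A A L).toAlgHom.comp
    (Algebra.TensorProduct.map (AlgHom.id A L) ρ)

section Aux
variable {T : Type*} [CommRing T]

theorem aux_eval_mem (S : Subring T) {q : T[X]} (hq : ∀ i, q.coeff i ∈ S) {u : T}
    (hu : u ∈ S) : q.eval u ∈ S := by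
  rw [Polynomial.eval_eq_sum_range]
  exact Subring.sum_mem _ fun i _ => Subring.mul_mem _ (hq i) (Subring.pow_mem _ hu i)

theorem aux_deriv_mem (S : Subring T) {q : T[X]} (hq : ∀ i, q.coeff i ∈ S) :
    ∀ i, (derivative q).coeff i ∈ S := fun i => by
  rw [Polynomial.coeff_derivative]
  exact Subring.mul_mem _ (hq _) (Subring.add_mem _ (natCast_mem _ _) (Subring.one_mem _))

theorem aux_deriv_unit_perturb (q : T[X]) {u d : T}
    (hu : IsUnit ((derivative q).eval u)) (hd : IsNilpotent d) :
    IsUnit ((derivative q).eval (u + d)) := by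
  obtain ⟨k, hk⟩ := (derivative q).binomExpansion u d
  have h2 : (derivative q).eval (u + d)
      = ((derivative (derivative q)).eval u * d + k * d ^ 2) + (derivative q).eval u := by
    rw [hk]; ring
  rw [h2]
  refine IsNilpotent.isUnit_add_right_of_commute ?_ hu (Commute.all _ _)
  have hd2 : IsNilpotent (d ^ 2) := by rw [sq]; exact (Commute.all _ _).isNilpotent_mul_right hd
  exact Commute.isNilpotent_add (Commute.all _ _)
    ((Commute.all _ _).isNilpotent_mul_left hd)
    ((Commute.all _ _).isNilpotent_mul_left hd2)

theorem aux_unique_root (q : T[X]) {u v : T} (hu : q.eval u = 0) (hv : q.eval v = 0)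
    (hunit : IsUnit ((derivative q).eval u)) (hnil : IsNilpotent (v - u)) : v = u := by
  obtain ⟨k, hk⟩ := q.binomExpansion u (v - u)
  rw [add_sub_cancel, hv, hu, zero_add] at hk
  have h2 : (v - u) * ((derivative q).eval u + k * (v - u)) = 0 := by
    linear_combination -hk
  have hu2 : IsUnit ((derivative q).eval u + k * (v - u)) :=
    IsNilpotent.isUnit_add_left_of_commute
      ((Commute.all _ _).isNilpotent_mul_left hnil) hunit (Commute.all _ _)
  have := (IsUnit.mul_left_eq_zero hu2).mp h2
  rw [sub_eq_zero] at this; exact this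

theorem aux_newton (S : Subring T) (hinv : ∀ s ∈ S, IsUnit s → ∃ t ∈ S, s * t = 1)
    (q : T[X]) (hq : ∀ i, q.coeff i ∈ S) :
    ∀ (k : ℕ) (u₀ : T), u₀ ∈ S → q.eval u₀ ^ 2 ^ k = 0 → IsUnit ((derivative q).eval u₀) →
      ∃ u ∈ S, q.eval u = 0 ∧ IsNilpotent (u - u₀) := by
  intro k
  induction k with
  | zero =>
    intro u₀ h1 h2 h3
    exact ⟨u₀, h1, by simpa using h2, by simp⟩
  | succ k ih =>
    intro u₀ hu₀S hzero hunit
    obtain ⟨w, hwS, hw⟩ := hinv _ (aux_eval_mem S (aux_deriv_mem S hq) hu₀S) hunit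
    set d : T := -(q.eval u₀ * w) with hd
    have hdS : d ∈ S := Subring.neg_mem _ (Subring.mul_mem _ (aux_eval_mem S hq hu₀S) hwS)
    have hq0nil : IsNilpotent (q.eval u₀) := ⟨2 ^ (k + 1), hzero⟩
    have hdnil : IsNilpotent d :=
      IsNilpotent.neg ((Commute.all _ _).isNilpotent_mul_right hq0nil)
    obtain ⟨c, hc⟩ := q.binomExpansion u₀ d
    have heval : q.eval (u₀ + d) = c * (q.eval u₀ ^ 2 * w ^ 2) := by
      rw [hc, hd]
      have : (derivative q).eval u₀ * -(q.eval u₀ * w)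
          = -(q.eval u₀ * ((derivative q).eval u₀ * w)) := by ring
      rw [this, hw]; ring
    have hpow : q.eval (u₀ + d) ^ 2 ^ k = 0 := by
      rw [heval, mul_pow, mul_pow, ← pow_mul, ← pow_mul]
      have h2 : 2 * 2 ^ k = 2 ^ (k + 1) := by rw [pow_succ]; ring
      rw [h2, hzero]
      ring
    obtain ⟨u, h1, h2, h3⟩ := ih (u₀ + d) (Subring.add_mem _ hu₀S hdS) hpow
      (aux_deriv_unit_perturb q hunit hdnil)
    refine ⟨u, h1, h2, ?_⟩
    have : u - u₀ = (u - (u₀ + d)) + d := by ring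
    rw [this]
    exact Commute.isNilpotent_add (Commute.all _ _) h3 hdnil

theorem aux_pow_two_pow_of_nilpotent {z : T} (h : IsNilpotent z) : ∃ k, z ^ 2 ^ k = 0 := by
  obtain ⟨n, hn⟩ := h
  exact ⟨n, pow_eq_zero_of_le (Nat.lt_two_pow_self (n := n)).le hn⟩

end Aux


section PartA
variable {A K : Type*} [Field A] [Field K] [Algebra A K] [IsAlgClosed K]

theorem partA (F : IntermediateField A K) (σK : K →ₐ[A] K)
    (hFσ : Set.BijOn σK (F : Set K) (F : Set K))
    (F' : Subalgebra A K) (hF' : ∀ x : K, x ∈ F' ↔ IsAlgebraic F x) :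
    Set.BijOn σK (F' : Set K) (F' : Set K) := by
  have hinj : Function.Injective σK := σK.toRingHom.injective
  -- restriction of σK to F as an algebra endomorphism of F
  let σF : F →ₐ[A] F :=
    { toFun := fun x => ⟨σK x, hFσ.mapsTo x.2⟩
      map_one' := Subtype.ext (by simp)
      map_mul' := fun x y => Subtype.ext (by push_cast; simp)
      map_zero' := Subtype.ext (by simp)
      map_add' := fun x y => Subtype.ext (by push_cast; simp)
      commutes' := fun a => Subtype.ext (by
        have : (algebraMap A F a : K) = algebraMap A K a := by
          exact (IsScalarTower.algebraMap_apply A F K a).symm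
        simp [this, σK.commutes]) }
  have hσF_apply : ∀ x : F, (σF x : K) = σK x := fun x => rfl
  have hσFinj : Function.Injective σF := fun x y h => by
    apply Subtype.ext; apply hinj
    rw [← hσF_apply, ← hσF_apply, h]
  have hσFsurj : Function.Surjective σF := by
    intro y
    obtain ⟨x, hx, hxy⟩ := hFσ.surjOn y.2
    exact ⟨⟨x, hx⟩, Subtype.ext hxy⟩
  -- comp identity
  have hcomp : (algebraMap F K).comp (σF : F →+* F) = (σK : K →+* K).comp (algebraMap F K) := by
    ext x; exact (hσF_apply x)
  -- key : roots of F-polynomials are in F'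
  have key : ∀ z : K, ∀ g : F[X], g ≠ 0 → aeval z g = 0 → z ∈ F' := by
    intro z g hg0 hgz
    exact (hF' z).mpr ⟨g, hg0, hgz⟩
  constructor
  · -- MapsTo
    intro x hx
    obtain ⟨p, hp0, hpx⟩ := (hF' x).mp hx
    refine key _ (p.map (σF : F →+* F)) (by
      exact (Polynomial.map_ne_zero_iff (fun a b h => hσFinj h)).mpr hp0) ?_
    rw [aeval_def, eval₂_map, hcomp]
    show eval₂ ((σK : K →+* K).comp (algebraMap F K)) ((σK : K →+* K) x) p = 0
    rw [← Polynomial.hom_eval₂, ← aeval_def, hpx, map_zero]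
  refine ⟨fun x hx y hy h => hinj h, ?_⟩
  -- SurjOn
  intro y hy
  obtain ⟨g, hg0, hgy⟩ := (hF' y).mp hy
  let σFe : F ≃ₐ[A] F := AlgEquiv.ofBijective σF ⟨hσFinj, hσFsurj⟩
  let h : F[X] := g.map (σFe.symm : F →+* F)
  have hh0 : h ≠ 0 :=
    (Polynomial.map_ne_zero_iff (σFe.symm : F →+* F).injective).mpr hg0
  have hhσ : h.map (σF : F →+* F) = g := by
    rw [Polynomial.map_map]
    have : (σF : F →+* F).comp (σFe.symm : F →+* F) = RingHom.id F := by
      refine RingHom.ext fun x => ?_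
      show σF (σFe.symm x) = x
      exact σFe.apply_symm_apply x
    rw [this, Polynomial.map_id]
  let H : K[X] := h.map (algebraMap F K)
  have hH0 : H ≠ 0 := (Polynomial.map_ne_zero_iff (algebraMap F K).injective).mpr hh0
  have hHmap : H.map (σK : K →+* K) = g.map (algebraMap F K) := by
    show (h.map (algebraMap F K)).map (σK : K →+* K) = g.map (algebraMap F K)
    rw [Polynomial.map_map, ← hcomp, ← Polynomial.map_map, hhσ]
  have hySmem : y ∈ (H.map (σK : K →+* K)).roots := by
    rw [hHmap, mem_roots ((Polynomial.map_ne_zero_iff (algebraMap F K).injective).mpr hg0)]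
    rw [IsRoot.def, Polynomial.eval_map, ← aeval_def]
    exact hgy
  rw [(IsAlgClosed.splits H).roots_map _, Multiset.mem_map] at hySmem
  obtain ⟨z, hzH, hzy⟩ := hySmem
  have hzF' : z ∈ F' := by
    refine key z h hh0 ?_
    have := (mem_roots hH0).mp hzH
    rw [IsRoot.def, Polynomial.eval_map, ← aeval_def] at this
    exact this
  exact ⟨z, hzF', hzy⟩

end PartA



section Cls
variable {A B K : Type*} [Field A] [CommRing B] [Algebra A B] [FiniteDimensional A B]
  [Field K] [Algebra A K]

theorem rhoHom_tmul (ρ : B →ₐ[A] A) (k : K) (b : B) :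
    rhoHom A K B ρ (k ⊗ₜ[A] b) = algebraMap A K (ρ b) * k := by
  simp [rhoHom, Algebra.smul_def]

theorem exists_rho [IsAlgClosed K]
    (hres : ∀ m : Ideal B, m.IsMaximal → Function.Bijective (algebraMap A (B ⧸ m)))
    (M : Ideal (TensorProduct A K B)) (hM : M.IsMaximal) :
    ∃ ρ : B →ₐ[A] A, ∀ z, rhoHom A K B ρ z = 0 ↔ z ∈ M := by
  haveI := hM
  letI : Field (TensorProduct A K B ⧸ M) := Ideal.Quotient.field M
  haveI : Module.Finite K (TensorProduct A K B) := Module.Finite.base_change A K B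
  haveI : Module.Finite K (TensorProduct A K B ⧸ M) :=
    Module.Finite.of_surjective (Ideal.Quotient.mkₐ K M).toLinearMap
      Ideal.Quotient.mk_surjective
  haveI : Algebra.IsIntegral K (TensorProduct A K B ⧸ M) := Algebra.IsIntegral.of_finite K _
  have hbij : Function.Bijective (algebraMap K (TensorProduct A K B ⧸ M)) :=
    ⟨(algebraMap K _).injective, IsAlgClosed.algebraMap_bijective_of_isIntegral.2⟩
  let EK : K ≃+* (TensorProduct A K B ⧸ M) := RingEquiv.ofBijective _ hbij
  let φ : TensorProduct A K B →+* K := EK.symm.toRingHom.comp (Ideal.Quotient.mk M)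
  have hker : ∀ z, φ z = 0 ↔ z ∈ M := by
    intro z
    rw [← Ideal.Quotient.eq_zero_iff_mem]
    show EK.symm _ = 0 ↔ _
    rw [map_eq_zero_iff _ EK.symm.injective]
  have hφK : ∀ k : K, φ (algebraMap K (TensorProduct A K B) k) = k := by
    intro k
    show EK.symm (Ideal.Quotient.mk M (algebraMap K (TensorProduct A K B) k)) = k
    have : Ideal.Quotient.mk M (algebraMap K (TensorProduct A K B) k)
        = algebraMap K (TensorProduct A K B ⧸ M) k := rfl
    rw [this]
    exact EK.symm_apply_apply k
  have hφA : ∀ a : A, φ (algebraMap A (TensorProduct A K B) a) = algebraMap A K a := by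
    intro a
    rw [IsScalarTower.algebraMap_apply A K (TensorProduct A K B) a]
    exact hφK _
  -- ρ' : B → K
  let ρ' : B →+* K := φ.comp (Algebra.TensorProduct.includeRight (R := A) (A := K) (B := B)).toRingHom
  have hρ'A : ∀ a : A, ρ' (algebraMap A B a) = algebraMap A K a := by
    intro a
    show φ (Algebra.TensorProduct.includeRight (algebraMap A B a)) = _
    rw [Algebra.TensorProduct.includeRight.commutes]
    exact hφA a
  -- kernel of ρ' is a maximal ideal of B
  let m : Ideal B := RingHom.ker ρ'
  haveI hmp : m.IsPrime := RingHom.ker_isPrime ρ'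
  haveI : Module.Finite A (B ⧸ m) :=
    Module.Finite.of_surjective (Ideal.Quotient.mkₐ A m).toLinearMap Ideal.Quotient.mk_surjective
  haveI : Algebra.IsIntegral A (B ⧸ m) := Algebra.IsIntegral.of_finite A _
  have hmmax : m.IsMaximal := by
    refine Ideal.Quotient.maximal_of_isField m ?_
    exact isField_of_isIntegral_of_isField' (Field.toIsField A)
  have hb := hres m hmmax
  let eqm : A ≃+* (B ⧸ m) := RingEquiv.ofBijective _ hb
  let ρR : B →+* A := eqm.symm.toRingHom.comp (Ideal.Quotient.mk m)
  have hρRA : ∀ a : A, ρR (algebraMap A B a) = a := by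
    intro a
    show eqm.symm (Ideal.Quotient.mk m (algebraMap A B a)) = a
    have : Ideal.Quotient.mk m (algebraMap A B a) = eqm a := rfl
    rw [this, eqm.symm_apply_apply]
  let ρ : B →ₐ[A] A := { ρR with commutes' := hρRA }
  have hρ : ∀ b : B, ρ' b = algebraMap A K (ρ b) := by
    intro b
    have h1 : Ideal.Quotient.mk m b = algebraMap A (B ⧸ m) (ρ b) := by
      show _ = eqm (eqm.symm (Ideal.Quotient.mk m b))
      rw [eqm.apply_symm_apply]
    have h2 : b - algebraMap A B (ρ b) ∈ m := by
      rw [← Ideal.Quotient.eq_zero_iff_mem, map_sub, h1]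
      have : Ideal.Quotient.mk m (algebraMap A B (ρ b)) = algebraMap A (B ⧸ m) (ρ b) := rfl
      rw [this, sub_self]
    have h3 : ρ' (b - algebraMap A B (ρ b)) = 0 := h2
    rw [map_sub, sub_eq_zero] at h3
    rw [h3, hρ'A]
  -- now show φ agrees with rhoHom ρ
  let φA : TensorProduct A K B →ₐ[A] K := { φ with commutes' := hφA }
  have hagree : rhoHom A K B ρ = φA := by
    apply Algebra.TensorProduct.ext'
    intro k b
    rw [rhoHom_tmul]
    show _ = φ (k ⊗ₜ[A] b)
    have hsplit : (k ⊗ₜ[A] b : TensorProduct A K B)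
        = (algebraMap K (TensorProduct A K B) k) * ((1 : K) ⊗ₜ[A] b) := by
      rw [Algebra.TensorProduct.algebraMap_apply, Algebra.TensorProduct.tmul_mul_tmul,
        mul_one, one_mul]
      simp
    rw [hsplit, map_mul, hφK]
    have hrr : φ ((1 : K) ⊗ₜ[A] b) = ρ' b := rfl
    rw [hrr, hρ b]
    ring
  refine ⟨ρ, fun z => ?_⟩
  have : rhoHom A K B ρ z = φ z := by rw [hagree]; rfl
  rw [this]
  exact hker z

theorem nilpotent_of_rho_zero [IsAlgClosed K]
    (hres : ∀ m : Ideal B, m.IsMaximal → Function.Bijective (algebraMap A (B ⧸ m)))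
    (z : TensorProduct A K B) (hz : ∀ ρ : B →ₐ[A] A, rhoHom A K B ρ z = 0) :
    IsNilpotent z := by
  haveI : Module.Finite K (TensorProduct A K B) := Module.Finite.base_change A K B
  haveI : IsArtinianRing (TensorProduct A K B) := IsArtinianRing.of_finite K _
  have hjac : z ∈ Ideal.jacobson (⊥ : Ideal (TensorProduct A K B)) := by
    rw [Ideal.jacobson]
    rw [Ideal.mem_sInf]
    rintro J ⟨-, hJmax⟩
    obtain ⟨ρ, hρ⟩ := exists_rho hres J hJmax
    exact (hρ z).mp (hz ρ)
  obtain ⟨n, hn⟩ := IsArtinianRing.isNilpotent_jacobson_bot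
      (R := TensorProduct A K B)
  refine ⟨n, ?_⟩
  have := Ideal.pow_mem_pow hjac n
  rw [hn] at this
  simpa using this

theorem unit_of_rho_ne_zero [IsAlgClosed K]
    (hres : ∀ m : Ideal B, m.IsMaximal → Function.Bijective (algebraMap A (B ⧸ m)))
    (z : TensorProduct A K B) (hz : ∀ ρ : B →ₐ[A] A, rhoHom A K B ρ z ≠ 0) :
    IsUnit z := by
  by_contra hu
  obtain ⟨M, hMmax, hMz⟩ := Ideal.exists_le_maximal (Ideal.span {z})
    (fun h => hu (Ideal.span_singleton_eq_top.mp h))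
  obtain ⟨ρ, hρ⟩ := exists_rho hres M hMmax
  exact hz ρ ((hρ z).mpr (hMz (Ideal.subset_span rfl)))

theorem algHom_finite : Finite (B →ₐ[A] A) := by
  haveI : IsArtinianRing B := IsArtinianRing.of_finite A B
  have hker : ∀ ρ : B →ₐ[A] A, (RingHom.ker (ρ : B →+* A)).IsMaximal := fun ρ =>
    RingHom.ker_isMaximal_of_surjective _ (fun a => ⟨algebraMap A B a, ρ.commutes a⟩)
  have hinj : Function.Injective
      (fun ρ : (B →ₐ[A] A) => (⟨RingHom.ker (ρ : B →+* A), hker ρ⟩ :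
        {I : Ideal B | I.IsMaximal})) := by
    intro ρ₁ ρ₂ h
    simp only [Subtype.mk_eq_mk] at h
    refine AlgHom.ext fun b => ?_
    have h1 : b - algebraMap A B (ρ₁ b) ∈ RingHom.ker (ρ₁ : B →+* A) := by
      simp [RingHom.mem_ker, sub_eq_zero]
    rw [h] at h1
    have := RingHom.mem_ker.mp h1
    rw [map_sub, sub_eq_zero] at this
    have h2 : ρ₂ (algebraMap A B (ρ₁ b)) = ρ₁ b := by simp
    rw [← h2]
    exact this.symm
  haveI : Finite {I : Ideal B | I.IsMaximal} :=
    (IsArtinianRing.setOfPred_isMaximal_finite B).to_subtype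
  exact Finite.of_injective _ hinj

open scoped Classical in
theorem exists_dual_elements :
    ∃ ε : (B →ₐ[A] A) → B, ∀ ρ ρ' : B →ₐ[A] A, ρ' (ε ρ) = if ρ = ρ' then 1 else 0 := by
  classical
  haveI : Finite (B →ₐ[A] A) := algHom_finite
  haveI : IsArtinianRing B := IsArtinianRing.of_finite A B
  have hker : ∀ ρ : B →ₐ[A] A, (RingHom.ker (ρ : B →+* A)).IsMaximal := fun ρ =>
    RingHom.ker_isMaximal_of_surjective _ (fun a => ⟨algebraMap A B a, ρ.commutes a⟩)
  have hkerinj : ∀ ρ₁ ρ₂ : B →ₐ[A] A,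
      RingHom.ker (ρ₁ : B →+* A) = RingHom.ker (ρ₂ : B →+* A) → ρ₁ = ρ₂ := by
    intro ρ₁ ρ₂ h
    refine AlgHom.ext fun b => ?_
    have h1 : b - algebraMap A B (ρ₁ b) ∈ RingHom.ker (ρ₁ : B →+* A) := by
      simp [RingHom.mem_ker, sub_eq_zero]
    rw [h] at h1
    have := RingHom.mem_ker.mp h1
    rw [map_sub, sub_eq_zero] at this
    have h2 : ρ₂ (algebraMap A B (ρ₁ b)) = ρ₁ b := by simp
    rw [← h2]
    exact this.symm
  have hcop : Pairwise fun ρ₁ ρ₂ : B →ₐ[A] A =>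
      IsCoprime (RingHom.ker (ρ₁ : B →+* A)) (RingHom.ker (ρ₂ : B →+* A)) := by
    intro ρ₁ ρ₂ hne
    rw [Ideal.isCoprime_iff_sup_eq]
    exact (hker ρ₁).coprime_of_ne (hker ρ₂) (fun h => hne (hkerinj _ _ h))
  have hstep : ∀ ρ : B →ₐ[A] A, ∃ b : B, ∀ ρ' : B →ₐ[A] A,
      b - (if ρ = ρ' then 1 else 0) ∈ RingHom.ker (ρ' : B →+* A) := by
    intro ρ
    exact Ideal.exists_forall_sub_mem_ideal hcop (fun ρ' => if ρ = ρ' then 1 else 0)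
  choose ε hε using hstep
  refine ⟨ε, fun ρ ρ' => ?_⟩
  have := RingHom.mem_ker.mp (hε ρ ρ')
  rw [map_sub, sub_eq_zero] at this
  have h2 : ρ' (ε ρ) = ρ' (if ρ = ρ' then 1 else 0) := this
  rw [h2]
  split <;> simp

end Cls

set_option maxHeartbeats 2000000 in
set_option synthInstance.maxHeartbeats 800000 in
/-- Let `A` be a field of characteristic zero, `B` a finite-dimensional
commutative `A`-algebra all of whose residue fields are `A`, and `π : B → A` an `A`-algebra
homomorphism.  Let `(K, e)` be a `D`-field with `K` algebraically closed, and `F` a subfield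
of `K` containing `A` such that `e` maps `F` into the canonical image of `F ⊗[A] B` in
`K ⊗[A] B` and each associated endomorphism `ρ^K ∘ e` restricts to a bijection of `F`.
Let `F' = {x ∈ K : x algebraic over F}`.  Then `e` maps `F'` into the canonical image of
`F' ⊗[A] B`, and each `ρ^K ∘ e` restricts to a bijection of `F'`. -/
theorem relative_algebraic_closure_is_inversive_D_subfield
    {A B K : Type*} [Field A] [CharZero A] [CommRing B] [Algebra A B]
    [FiniteDimensional A B]
    (hres : ∀ m : Ideal B, m.IsMaximal → Function.Bijective (algebraMap A (B ⧸ m)))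
    (π : B →ₐ[A] A)
    [Field K] [Algebra A K] [IsAlgClosed K]
    (e : K →ₐ[A] TensorProduct A K B)
    (hD : ∀ x : K, rhoHom A K B π (e x) = x)
    (F : IntermediateField A K)
    (hFe : ∀ x : K, x ∈ F →
      e x ∈ (Algebra.TensorProduct.map F.val (AlgHom.id A B)).range)
    (hFσ : ∀ ρ : B →ₐ[A] A,
      Set.BijOn (fun x : K => rhoHom A K B ρ (e x)) (F : Set K) (F : Set K))
    (F' : Subalgebra A K) (hF' : ∀ x : K, x ∈ F' ↔ IsAlgebraic F x) :
    (∀ x : K, x ∈ F' →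
      e x ∈ (Algebra.TensorProduct.map F'.val (AlgHom.id A B)).range) ∧
    ∀ ρ : B →ₐ[A] A,
      Set.BijOn (fun x : K => rhoHom A K B ρ (e x)) (F' : Set K) (F' : Set K) := by
  classical
  have hbij : ∀ ρ : B →ₐ[A] A,
      Set.BijOn (fun x : K => rhoHom A K B ρ (e x)) (F' : Set K) (F' : Set K) := by
    intro ρ
    exact partA F ((rhoHom A K B ρ).comp e) (hFσ ρ) F' hF'
  refine ⟨?_, hbij⟩
  intro x hx
  have hFsub : ∀ y : K, y ∈ F → y ∈ F' := by
    intro y hy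
    refine (hF' y).mpr ?_
    have : y = algebraMap F K ⟨y, hy⟩ := rfl
    rw [this]
    exact isAlgebraic_algebraMap _
  haveI : CharZero F := charZero_of_injective_algebraMap (algebraMap A F).injective
  have halg : IsAlgebraic F x := (hF' x).mp hx
  have hint : IsIntegral F x := halg.isIntegral
  set P : Polynomial F := minpoly F x with hP
  have hP0 : P ≠ 0 := minpoly.ne_zero hint
  set PK : K[X] := P.map (algebraMap F K) with hPKdef
  have hPKx : PK.eval x = 0 := by
    rw [hPKdef, Polynomial.eval_map, ← aeval_def]
    exact minpoly.aeval F x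
  have hsep : P.Separable := (minpoly.irreducible hint).separable
  have hPK'x : (derivative PK).eval x ≠ 0 := by
    obtain ⟨a, b, hab⟩ := hsep
    intro h0
    have hder : (aeval x) (derivative P) = 0 := by
      rw [aeval_def, ← Polynomial.eval_map, ← Polynomial.derivative_map, ← hPKdef]
      exact h0
    have h1 := congrArg (aeval x) hab
    rw [map_add, map_mul, map_mul, hder, mul_zero, add_zero, map_one] at h1
    rw [show (aeval x) P = 0 from minpoly.aeval F x, mul_zero] at h1
    exact zero_ne_one h1
  -- the polynomial over K ⊗ B
  set T := TensorProduct A K B with hT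
  set q : Polynomial T := PK.map (e : K →+* T) with hqdef
  have hqe : q.eval (e x) = 0 := by
    show (PK.map (e : K →+* T)).eval ((e : K →+* T) x) = 0
    rw [Polynomial.eval_map, Polynomial.eval₂_hom, hPKx, map_zero]
  -- the subring
  set Φ : TensorProduct A (↥F') B →ₐ[A] T := Algebra.TensorProduct.map F'.val (AlgHom.id A B)
    with hΦdef
  set S : Subring T := Φ.range.toSubring with hSdef
  have hmemS : ∀ z : T, z ∈ S ↔ z ∈ Φ.range := fun z => Iff.rfl
  -- coefficients of q lie in S
  let ι : F →ₐ[A] ↥F' := AlgHom.codRestrict F.val F' (fun y => hFsub y y.2)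
  have hvalcomp : F'.val.comp ι = F.val := AlgHom.ext fun y => rfl
  have hidcomp : (AlgHom.id A B).comp (AlgHom.id A B) = AlgHom.id A B := AlgHom.ext fun b => rfl
  have hcompmap : Φ.comp (Algebra.TensorProduct.map ι (AlgHom.id A B))
      = Algebra.TensorProduct.map F.val (AlgHom.id A B) := by
    rw [hΦdef, ← Algebra.TensorProduct.map_comp, hvalcomp, hidcomp]
  have hrange_le : ∀ z : T, z ∈ (Algebra.TensorProduct.map F.val (AlgHom.id A B)).range →
      z ∈ Φ.range := by
    rintro z ⟨w, rfl⟩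
    exact ⟨Algebra.TensorProduct.map ι (AlgHom.id A B) w, by rw [← hcompmap]; rfl⟩
  have hqS : ∀ i, q.coeff i ∈ S := by
    intro i
    rw [hqdef, Polynomial.coeff_map]
    have hcoe : PK.coeff i ∈ F := by
      rw [hPKdef, Polynomial.coeff_map]
      exact (P.coeff i).2
    exact hrange_le _ (hFe _ hcoe)
  -- injectivity of Φ
  have hΦinj : Function.Injective Φ := by
    have h1 : Φ.toLinearMap = LinearMap.rTensor B F'.val.toLinearMap :=
      TensorProduct.ext' fun a b => rfl
    have h2 : Function.Injective (F'.val.toLinearMap) := fun a b h => Subtype.ext h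
    have h3 := Module.Flat.rTensor_preserves_injective_linearMap
      (M := B) F'.val.toLinearMap h2
    intro z w h
    exact h3 (by rw [← h1]; exact h)
  -- F' is a field
  have hF'field : IsField ↥F' := by
    refine ⟨⟨0, 1, fun h => zero_ne_one (congrArg Subtype.val h)⟩, mul_comm, ?_⟩
    intro a ha
    have hane : (a : K) ≠ 0 := fun h => ha (Subtype.ext h)
    have hainv : (a : K)⁻¹ ∈ F' := (hF' _).mpr ((hF' (a : K)).mp a.2).inv
    exact ⟨⟨(a : K)⁻¹, hainv⟩, Subtype.ext (mul_inv_cancel₀ hane)⟩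
  letI : Field ↥F' := hF'field.toField
  -- inverse-closure of S
  have hinvS : ∀ s ∈ S, IsUnit s → ∃ t ∈ S, s * t = 1 := by
    intro s hs hu
    obtain ⟨r, rfl⟩ := (hmemS s).mp hs
    have hmul : Function.Injective (LinearMap.mulLeft (↥F') r) := by
      intro w w' hww
      simp only [LinearMap.mulLeft_apply] at hww
      have : Φ r * Φ w = Φ r * Φ w' := by rw [← map_mul, ← map_mul, hww]
      exact hΦinj (hu.mul_left_cancel this)
    obtain ⟨r', hr'⟩ := LinearMap.injective_iff_surjective.mp hmul 1
    refine ⟨Φ r', (hmemS _).mpr ⟨r', rfl⟩, ?_⟩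
    simp only [LinearMap.mulLeft_apply] at hr'
    have h2 : Φ (r * r') = 1 := by rw [hr']; exact map_one Φ
    rw [map_mul] at h2
    exact h2
  -- dual elements and approximate solution u₀
  haveI : Finite (B →ₐ[A] A) := algHom_finite
  haveI := Fintype.ofFinite (B →ₐ[A] A)
  obtain ⟨ε, hε⟩ := exists_dual_elements (A := A) (B := B)
  have hσmem : ∀ ρ : B →ₐ[A] A, rhoHom A K B ρ (e x) ∈ F' := fun ρ => (hbij ρ).mapsTo hx
  set u₀ : T := Φ (∑ ρ : B →ₐ[A] A,
      (⟨rhoHom A K B ρ (e x), hσmem ρ⟩ : ↥F') ⊗ₜ[A] ε ρ) with hu₀def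
  have hu₀S : u₀ ∈ S := (hmemS _).mpr ⟨_, rfl⟩
  have hres_u₀ : ∀ ρ : B →ₐ[A] A, rhoHom A K B ρ u₀ = rhoHom A K B ρ (e x) := by
    intro ρ
    have hterm : ∀ ρ' : B →ₐ[A] A,
        rhoHom A K B ρ (Φ ((⟨rhoHom A K B ρ' (e x), hσmem ρ'⟩ : ↥F') ⊗ₜ[A] ε ρ'))
          = if ρ' = ρ then rhoHom A K B ρ' (e x) else 0 := by
      intro ρ'
      have hΦt : Φ ((⟨rhoHom A K B ρ' (e x), hσmem ρ'⟩ : ↥F') ⊗ₜ[A] ε ρ')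
          = (rhoHom A K B ρ' (e x)) ⊗ₜ[A] ε ρ' := rfl
      rw [hΦt, rhoHom_tmul, hε ρ' ρ]
      split <;> simp
    rw [hu₀def, map_sum, map_sum]
    rw [Finset.sum_congr rfl (fun ρ' _ => hterm ρ')]
    rw [Finset.sum_ite_eq' Finset.univ ρ (fun ρ' => rhoHom A K B ρ' (e x))]
    simp
  have hnil0 : IsNilpotent (e x - u₀) :=
    nilpotent_of_rho_zero hres _ (fun ρ => by rw [map_sub, hres_u₀ ρ, sub_self])
  -- residue computations
  have hcommhom : ∀ (f : T →+* K) (r : Polynomial T) (z : T),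
      f (r.eval z) = (r.map f).eval (f z) := by
    intro f r z
    rw [Polynomial.eval_map, Polynomial.eval₂_hom]
  have hmapq : ∀ ρ : B →ₐ[A] A, q.map ((rhoHom A K B ρ : T →+* K))
      = PK.map ((rhoHom A K B ρ : T →+* K).comp (e : K →+* T)) := by
    intro ρ
    rw [hqdef, Polynomial.map_map]
  have hgx : ∀ ρ : B →ₐ[A] A,
      ((rhoHom A K B ρ : T →+* K).comp (e : K →+* T)) x = rhoHom A K B ρ (e x) := fun ρ => rfl
  have hq0nil : IsNilpotent (q.eval u₀) := by
    refine nilpotent_of_rho_zero hres _ (fun ρ => ?_)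
    have h1 : rhoHom A K B ρ (q.eval u₀)
        = (q.map ((rhoHom A K B ρ : T →+* K))).eval (rhoHom A K B ρ u₀) := hcommhom _ _ _
    rw [h1]
    rw [hmapq ρ]
    rw [hres_u₀ ρ]
    rw [← hgx ρ]
    rw [Polynomial.eval_map]
    rw [Polynomial.eval₂_hom]
    rw [hPKx, map_zero]
  have hq'unit : IsUnit ((derivative q).eval u₀) := by
    refine unit_of_rho_ne_zero hres _ (fun ρ => ?_)
    have h1 : rhoHom A K B ρ ((derivative q).eval u₀)
        = ((derivative q).map ((rhoHom A K B ρ : T →+* K))).eval (rhoHom A K B ρ u₀) :=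
      hcommhom _ _ _
    rw [h1]
    rw [Polynomial.derivative_map]
    rw [Polynomial.map_map]
    rw [hres_u₀ ρ]
    rw [← hgx ρ]
    rw [Polynomial.eval_map]
    rw [Polynomial.eval₂_hom]
    intro hzero
    have hinj : Function.Injective ((rhoHom A K B ρ : T →+* K).comp (e : K →+* T)) :=
      RingHom.injective _
    have : (derivative PK).eval x = 0 := by
      apply hinj
      rw [hzero, map_zero]
    exact hPK'x this
  obtain ⟨k, hk⟩ := aux_pow_two_pow_of_nilpotent hq0nil
  obtain ⟨u, huS, hqu, hunil⟩ := aux_newton S hinvS q hqS k u₀ hu₀S hk hq'unit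
  have hq'unit_u : IsUnit ((derivative q).eval u) := by
    have := aux_deriv_unit_perturb q hq'unit hunil
    rwa [show u₀ + (u - u₀) = u by ring] at this
  have hnil_ex : IsNilpotent (e x - u) := by
    have : e x - u = (e x - u₀) - (u - u₀) := by ring
    rw [this]
    exact Commute.isNilpotent_sub (Commute.all _ _) hnil0 hunil
  have hfinal : e x = u := aux_unique_root q hqu hqe hq'unit_u hnil_ex
  rw [hfinal]
  exact (hmemS u).mp huS
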